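/- If Π_n is a uniform random permutation of [n] and Γ_{n+1} is a uniform random (n+1)-cycle in S_{n+1}, then the random sets F_n = {k ∈ [n] : Π_n(k) = k} and G_n = {k ∈ [n] : Γ_{n+1}(k) = k+1} have the same distribution (as random subsets of [n]). -/

import Mathlib

/-- `σ` consists of a single cycle through all of `Fin n` (an `n`-cycle). -/
def IsFullCycle {n : ℕ} (σ : Equiv.Perm (Fin n)) : Prop :=
  ∀ x y : Fin n, ∃ i : ℕ, (σ ^ i) x = y

noncomputable instance instDecFC {n : ℕ} : DecidablePred (@IsFullCycle n) :=
  fun _ => Classical.propDecidable _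

open Finset Equiv

namespace Stmt15

/-- Insert the "hole" `w` into the cycle structure of `τ`, placing `w` so that it is
mapped onto (the embedding of) `a`, i.e. `w` is spliced in just before `a`. -/
def ins {n : ℕ} (w : Fin (n+1)) (a : Fin n) (τ : Equiv.Perm (Fin n)) :
    Equiv.Perm (Fin (n+1)) :=
  (finSuccEquiv' w).trans ((τ.optionCongr.trans (Equiv.swap none (some a))).trans
    (finSuccEquiv' w).symm)

theorem ins_apply_hole {n : ℕ} (w : Fin (n+1)) (a : Fin n) (τ : Equiv.Perm (Fin n)) :
    ins w a τ w = w.succAbove a := by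
  simp [ins, finSuccEquiv'_at, Equiv.swap_apply_left, finSuccEquiv'_symm_some]

theorem ins_apply_of_eq {n : ℕ} {w : Fin (n+1)} {a : Fin n} {τ : Equiv.Perm (Fin n)}
    {x : Fin n} (h : τ x = a) : ins w a τ (w.succAbove x) = w := by
  simp [ins, finSuccEquiv'_succAbove, h, Equiv.swap_apply_right, finSuccEquiv'_symm_none]

theorem ins_apply_of_ne {n : ℕ} {w : Fin (n+1)} {a : Fin n} {τ : Equiv.Perm (Fin n)}
    {x : Fin n} (h : τ x ≠ a) : ins w a τ (w.succAbove x) = w.succAbove (τ x) := by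
  have : Equiv.swap (none : Option (Fin n)) (some a) (some (τ x)) = some (τ x) :=
    Equiv.swap_apply_of_ne_of_ne (by simp) (by simpa using h)
  simp [ins, finSuccEquiv'_succAbove, this, finSuccEquiv'_symm_some]


theorem pow_trans {n : ℕ} (σ : Equiv.Perm (Fin n)) {i j : ℕ} {x y z : Fin n}
    (h1 : (σ ^ i) x = y) (h2 : (σ ^ j) y = z) : (σ ^ (j + i)) x = z := by
  rw [pow_add, Equiv.Perm.mul_apply, h1, h2]

theorem fix_pow {n : ℕ} {σ : Equiv.Perm (Fin n)} {x : Fin n} (h : σ x = x) (i : ℕ) :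
    (σ ^ i) x = x := by
  induction i with
  | zero => rfl
  | succ i ih => rw [pow_succ', Equiv.Perm.mul_apply, ih, h]

theorem fc_ne_self {n : ℕ} {σ : Equiv.Perm (Fin (n+2))} (hσ : IsFullCycle σ)
    (X : Fin (n+2)) : σ X ≠ X := by
  intro h
  obtain ⟨Y, hY⟩ := exists_ne X
  obtain ⟨i, hi⟩ := hσ X Y
  rw [fix_pow h] at hi
  exact hY hi.symm


section FC
variable {n : ℕ} {w : Fin (n+1)} {a : Fin n} {τ : Equiv.Perm (Fin n)}

theorem ins_step (x : Fin n) :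
    ∃ i : ℕ, ((ins w a τ) ^ i) (w.succAbove x) = w.succAbove (τ x) := by
  by_cases h : τ x = a
  · refine ⟨2, ?_⟩
    have : ((ins w a τ) ^ 2) (w.succAbove x) = ins w a τ (ins w a τ (w.succAbove x)) := by
      rw [pow_succ, pow_one, Equiv.Perm.mul_apply]
    rw [this, ins_apply_of_eq h, ins_apply_hole, h]
  · exact ⟨1, by rw [pow_one, ins_apply_of_ne h]⟩

theorem ins_reach (x : Fin n) (j : ℕ) :
    ∃ i : ℕ, ((ins w a τ) ^ i) (w.succAbove x) = w.succAbove ((τ ^ j) x) := by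
  induction j with
  | zero => exact ⟨0, rfl⟩
  | succ j ih =>
      obtain ⟨i, hi⟩ := ih
      obtain ⟨i', hi'⟩ := ins_step ((τ ^ j) x)
      refine ⟨i' + i, pow_trans _ hi ?_⟩
      rw [hi']
      congr 1
      rw [pow_succ', Equiv.Perm.mul_apply]

theorem fc_ins (hτ : IsFullCycle τ) : IsFullCycle (ins w a τ) := by
  have emb_reach : ∀ x y : Fin n, ∃ i : ℕ,
      ((ins w a τ) ^ i) (w.succAbove x) = w.succAbove y := by
    intro x y
    obtain ⟨j, hj⟩ := hτ x y
    obtain ⟨i, hi⟩ := ins_reach x j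
    exact ⟨i, by rw [hi, hj]⟩
  intro X Y
  rcases eq_or_ne X w with rfl | hX
  · rcases eq_or_ne Y X with rfl | hY
    · exact ⟨0, rfl⟩
    · obtain ⟨y, rfl⟩ := Y.exists_succAbove_eq hY
      obtain ⟨i, hi⟩ := emb_reach a y
      exact ⟨i + 1, pow_trans _ (by rw [pow_one, ins_apply_hole]) hi⟩
  · obtain ⟨x, rfl⟩ := X.exists_succAbove_eq hX
    rcases eq_or_ne Y w with rfl | hY
    · obtain ⟨i, hi⟩ := emb_reach x (τ.symm a)
      refine ⟨1 + i, pow_trans _ hi ?_⟩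
      rw [pow_one, ins_apply_of_eq (τ.apply_symm_apply a)]
    · obtain ⟨y, rfl⟩ := Y.exists_succAbove_eq hY
      exact emb_reach x y

theorem fc_of_ins (hσ : IsFullCycle (ins w a τ)) : IsFullCycle τ := by
  have key : ∀ i : ℕ, ∀ x y : Fin n,
      ((ins w a τ) ^ i) (w.succAbove x) = w.succAbove y → ∃ j : ℕ, (τ ^ j) x = y := by
    intro i
    induction i using Nat.strong_induction_on with
    | _ i IH =>
      intro x y hxy
      match i, hxy with
      | 0, hxy =>
          exact ⟨0, Fin.succAbove_right_injective hxy⟩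
      | 1, hxy =>
          by_cases h : τ x = a
          · rw [pow_one, ins_apply_of_eq h] at hxy
            exact absurd hxy.symm (Fin.succAbove_ne w y)
          · rw [pow_one, ins_apply_of_ne h] at hxy
            exact ⟨1, by rw [pow_one]; exact Fin.succAbove_right_injective hxy⟩
      | (m+2), hxy =>
          by_cases h : τ x = a
          · have h1 : ((ins w a τ) ^ (m+1)) (ins w a τ (w.succAbove x)) = w.succAbove y := by
              rw [← Equiv.Perm.mul_apply, ← pow_succ]; exact hxy
            rw [ins_apply_of_eq h] at h1
            have h2 : ((ins w a τ) ^ m) (ins w a τ w) = w.succAbove y := by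
              rw [← Equiv.Perm.mul_apply, ← pow_succ]; exact h1
            rw [ins_apply_hole] at h2
            obtain ⟨j, hj⟩ := IH m (by omega) a y h2
            exact ⟨j + 1, by rw [pow_add, Equiv.Perm.mul_apply, pow_one, h, hj]⟩
          · have h1 : ((ins w a τ) ^ (m+1)) (ins w a τ (w.succAbove x)) = w.succAbove y := by
              rw [← Equiv.Perm.mul_apply, ← pow_succ]; exact hxy
            rw [ins_apply_of_ne h] at h1
            obtain ⟨j, hj⟩ := IH (m+1) (by omega) (τ x) y h1
            exact ⟨j + 1, by rw [pow_add, Equiv.Perm.mul_apply, pow_one, hj]⟩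
  intro x y
  obtain ⟨i, hi⟩ := hσ (w.succAbove x) (w.succAbove y)
  exact key i x y hi

theorem ins_surj {σ : Equiv.Perm (Fin (n+1))} (hw : σ w ≠ w) :
    ∃ (a : Fin n) (τ : Equiv.Perm (Fin n)), σ = ins w a τ := by
  obtain ⟨a, ha⟩ := Fin.exists_succAbove_eq hw
  set h : Option (Fin n) ≃ Option (Fin n) :=
    (finSuccEquiv' w).symm.trans (σ.trans (finSuccEquiv' w)) with hh
  have hnone : h none = some a := by
    simp [hh, finSuccEquiv'_symm_none, ← ha, finSuccEquiv'_succAbove]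
  set τ := Equiv.removeNone h with hτ
  refine ⟨a, τ, ?_⟩
  ext X
  rcases eq_or_ne X w with rfl | hX
  · rw [ins_apply_hole, ha]
  · obtain ⟨x, rfl⟩ := X.exists_succAbove_eq hX
    by_cases hx : σ (w.succAbove x) = w
    · have hsx : h (some x) = none := by
        simp [hh, finSuccEquiv'_symm_some, hx, finSuccEquiv'_at]
      have h3 : τ x = a := by
        have h2 : some (τ x) = h none := Equiv.removeNone_none h hsx
        rw [hnone] at h2
        exact Option.some_injective _ h2
      rw [ins_apply_of_eq h3, hx]
    · obtain ⟨y, hy⟩ := Fin.exists_succAbove_eq hx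
      have hsx : h (some x) = some y := by
        simp [hh, finSuccEquiv'_symm_some, ← hy, finSuccEquiv'_succAbove]
      have hτx : τ x = y := by
        have := Equiv.removeNone_some h ⟨y, hsx⟩
        rw [hsx] at this
        exact Option.some_injective _ this
      have hne : τ x ≠ a := by
        intro hcon
        rw [hcon] at hτx
        rw [← hτx] at hy
        rw [ha] at hy
        exact hX (σ.injective hy).symm
      rw [ins_apply_of_ne hne, hτx, hy]

theorem ins_inj {a' : Fin n} {τ' : Equiv.Perm (Fin n)}
    (h : ins w a τ = ins w a' τ') : a = a' ∧ τ = τ' := by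
  have ha : a = a' := by
    have := congrArg (fun σ : Equiv.Perm (Fin (n+1)) => σ w) h
    simp only [ins_apply_hole] at this
    exact Fin.succAbove_right_injective this
  subst ha
  refine ⟨rfl, Equiv.ext fun x => ?_⟩
  have hx := congrArg (fun σ : Equiv.Perm (Fin (n+1)) => σ (w.succAbove x)) h
  by_cases h1 : τ x = a <;> by_cases h2 : τ' x = a
  · rw [h1, h2]
  · rw [ins_apply_of_eq h1, ins_apply_of_ne h2] at hx
    exact absurd hx (Fin.succAbove_ne w (τ' x)).symm
  · rw [ins_apply_of_ne h1, ins_apply_of_eq h2] at hx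
    exact absurd hx (Fin.succAbove_ne w (τ x))
  · rw [ins_apply_of_ne h1, ins_apply_of_ne h2] at hx
    exact Fin.succAbove_right_injective hx

end FC

section Count

theorem card_fc : ∀ n : ℕ,
    ((univ : Finset (Equiv.Perm (Fin (n+1)))).filter IsFullCycle).card = n.factorial := by
  intro n
  induction n with
  | zero =>
      rw [Finset.filter_true_of_mem, Finset.card_univ, Fintype.card_perm]
      · simp
      · intro σ _ x y
        refine ⟨0, ?_⟩
        fin_cases x; fin_cases y; simp
  | succ n ih =>
      have key : (univ ×ˢ univ.filter IsFullCycle :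
            Finset (Fin (n+1) × Equiv.Perm (Fin (n+1)))).card =
          ((univ : Finset (Equiv.Perm (Fin (n+2)))).filter IsFullCycle).card := by
        refine Finset.card_bij (fun p _ => ins (Fin.last (n+1)) p.1 p.2) ?_ ?_ ?_
        · intro p hp
          simp only [Finset.mem_filter, Finset.mem_product, Finset.mem_univ, true_and] at hp ⊢
          exact fc_ins hp
        · intro p hp q hq hpq
          obtain ⟨h1, h2⟩ := ins_inj hpq
          exact Prod.ext h1 h2
        · intro σ hσ
          simp only [Finset.mem_filter, Finset.mem_univ, true_and] at hσ
          obtain ⟨a, τ, rfl⟩ := ins_surj (fc_ne_self hσ (Fin.last (n+1)))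
          refine ⟨(a, τ), ?_, rfl⟩
          simp only [Finset.mem_product, Finset.mem_filter, Finset.mem_univ, true_and]
          exact fc_of_ins hσ
      rw [← key, Finset.card_product, Finset.card_univ, Fintype.card_fin, ih,
        Nat.factorial_succ]

theorem card_fc_constrained : ∀ (s n : ℕ) (A : Finset (Fin n)), A.card = s →
    ((univ : Finset (Equiv.Perm (Fin (n+1)))).filter
      (fun σ => IsFullCycle σ ∧ ∀ k ∈ A, σ k.castSucc = k.succ)).card
      = (n - s).factorial := by
  intro s
  induction s with
  | zero =>
      intro n A hA
      rw [Finset.card_eq_zero] at hA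
      subst hA
      rw [Nat.sub_zero, ← card_fc n]
      congr 1
      apply Finset.filter_congr
      intro σ _
      simp
  | succ s ih =>
      intro n A hA
      match n, A, hA with
      | 0, A, hA =>
          have h0 := A.card_le_univ
          simp only [Finset.card_univ, Fintype.card_fin] at h0
          omega
      | (m+1), A, hA =>
        have hne : A.Nonempty := Finset.card_pos.mp (by omega)
        set a : Fin (m+1) := A.max' hne with ha
        set w : Fin (m+2) := a.castSucc with hw
        have ham : (a : ℕ) ≤ m := Nat.lt_succ_iff.mp a.isLt
        set A' : Finset (Fin m) := univ.filter (fun k => k.castSucc ∈ A.erase a) with hA'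
        have hcard' : A'.card = s := by
          have hbij : A'.card = (A.erase a).card := by
            refine Finset.card_bij (fun k _ => k.castSucc) ?_ ?_ ?_
            · intro k hk
              simpa [hA'] using hk
            · intro k _ l _ h
              exact Fin.castSucc_injective _ h
            · intro j hj
              have h1 : j ≠ a := (Finset.mem_erase.mp hj).1
              have h2 : j ≤ a := A.le_max' j (Finset.mem_erase.mp hj).2
              have hjv : (j:ℕ) < (a:ℕ) :=
                lt_of_le_of_ne h2 (fun hh => h1 (Fin.ext hh))
              have hjm : (j:ℕ) < m := by omega
              refine ⟨⟨(j:ℕ), hjm⟩, ?_, Fin.ext rfl⟩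
              simp only [hA', Finset.mem_filter, Finset.mem_univ, true_and]
              have : Fin.castSucc (⟨(j:ℕ), hjm⟩ : Fin m) = j := Fin.ext rfl
              rw [this]
              exact hj
          rw [hbij, Finset.card_erase_of_mem (A.max'_mem hne), hA]
          omega
        have key : ((univ : Finset (Equiv.Perm (Fin (m+1)))).filter
            (fun τ => IsFullCycle τ ∧ ∀ k ∈ A', τ k.castSucc = k.succ)).card =
            ((univ : Finset (Equiv.Perm (Fin (m+2)))).filter
            (fun σ => IsFullCycle σ ∧ ∀ k ∈ A, σ k.castSucc = k.succ)).card := by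
          refine Finset.card_bij (fun τ _ => ins w a τ) ?_ ?_ ?_
          · intro τ hτ
            simp only [Finset.mem_filter, Finset.mem_univ, true_and] at hτ ⊢
            refine ⟨fc_ins hτ.1, ?_⟩
            intro k hk
            by_cases hka : k = a
            · rw [hka]
              have h1 : (a.castSucc : Fin (m+2)) = w := hw.symm
              rw [h1, ins_apply_hole, hw]
              exact Fin.succAbove_of_le_castSucc _ _ (le_refl _)
            · have hklt : k < a := lt_of_le_of_ne (A.le_max' k hk) hka
              have hkm : (k:ℕ) < m := by
                have := hklt
                simp only [Fin.lt_iff_val_lt_val] at this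
                omega
              set k' : Fin m := ⟨(k:ℕ), hkm⟩ with hk'def
              have hcast : k'.castSucc = k := Fin.ext rfl
              have hk' : k' ∈ A' := by
                simp only [hA', Finset.mem_filter, Finset.mem_univ, true_and, hcast]
                exact Finset.mem_erase.mpr ⟨hka, hk⟩
              have hτk : τ k = k'.succ := by
                have := hτ.2 k' hk'
                rwa [hcast] at this
              have hemb : w.succAbove k = k.castSucc :=
                Fin.succAbove_of_castSucc_lt _ _ (by
                  simpa [hw, Fin.castSucc_lt_castSucc_iff] using hklt)
              rw [← hemb]
              by_cases hc : τ k = a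
              · rw [ins_apply_of_eq hc]
                have hav : (a:ℕ) = (k:ℕ) + 1 := by
                  rw [← hc, hτk]; rfl
                exact Fin.ext (by simp [hw, hav])
              · rw [ins_apply_of_ne hc, hτk]
                have hlt : (k:ℕ) + 1 < (a:ℕ) := by
                  have h1 : k'.succ ≠ a := fun hh => hc (hτk.trans hh)
                  have h2 : ((k':Fin m).succ : ℕ) = (k:ℕ) + 1 := rfl
                  have h3 : (k:ℕ) < (a:ℕ) := hklt
                  rcases lt_or_eq_of_le (Nat.succ_le_of_lt h3) with h | h
                  · exact h
                  · exact absurd (Fin.ext (h2.trans h)) h1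
                rw [Fin.succAbove_of_castSucc_lt _ _ (by
                  simp only [hw, Fin.castSucc_lt_castSucc_iff, Fin.lt_iff_val_lt_val]
                  exact hlt)]
                exact Fin.ext (by simp [hk'def])
          · intro τ1 _ τ2 _ h
            exact (ins_inj h).2
          · intro σ hσ
            simp only [Finset.mem_filter, Finset.mem_univ, true_and] at hσ
            have hconstr_a : σ w = a.succ := hσ.2 a (A.max'_mem hne)
            have hwne : σ w ≠ w := by
              rw [hconstr_a, hw]
              intro hh
              have := congrArg Fin.val hh
              simp at this
            obtain ⟨a₀, τ, rfl⟩ := ins_surj hwne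
            have hsa : w.succAbove a = a.succ :=
              Fin.succAbove_of_le_castSucc _ _ (le_refl _)
            have ha₀ : a₀ = a := by
              apply Fin.succAbove_right_injective (p := w)
              rw [← ins_apply_hole w a₀ τ, hconstr_a, hsa]
            subst ha₀
            refine ⟨τ, ?_, rfl⟩
            simp only [Finset.mem_filter, Finset.mem_univ, true_and]
            refine ⟨fc_of_ins hσ.1, ?_⟩
            intro k' hk'
            simp only [hA', Finset.mem_filter, Finset.mem_univ, true_and] at hk'
            set k : Fin (m+1) := k'.castSucc with hkdef
            have hkA : k ∈ A := (Finset.mem_erase.mp hk').2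
            have hka : k ≠ a := (Finset.mem_erase.mp hk').1
            have hklt : k < a := lt_of_le_of_ne (A.le_max' k hkA) hka
            have hemb : w.succAbove k = k.castSucc :=
              Fin.succAbove_of_castSucc_lt _ _ (by
                simpa [hw, Fin.castSucc_lt_castSucc_iff] using hklt)
            have hck := hσ.2 k hkA
            rw [← hemb] at hck
            show τ k = k'.succ
            by_cases hc : τ k = a
            · rw [ins_apply_of_eq hc] at hck
              have hav : (a:ℕ) = (k:ℕ) + 1 := by
                have h0 := congrArg Fin.val hck
                simp [hw] at h0
                omega
              rw [hc]
              exact Fin.ext (by simp [hav, hkdef])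
            · rw [ins_apply_of_ne hc] at hck
              have hne2 : k.succ ≠ w := by
                intro hh
                rw [← hh] at hck
                exact Fin.succAbove_ne _ (τ k) hck
              have hlt : (k:ℕ) + 1 < (a:ℕ) := by
                have h3 : (k:ℕ) < (a:ℕ) := hklt
                rcases lt_or_eq_of_le (Nat.succ_le_of_lt h3) with h | h
                · exact h
                · exact absurd (Fin.ext (by simp [hw, ← h])) hne2
              apply Fin.succAbove_right_injective (p := w)
              rw [hck]
              rw [Fin.succAbove_of_castSucc_lt _ _ (by
                simp only [hw, Fin.castSucc_lt_castSucc_iff, Fin.lt_iff_val_lt_val]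
                exact hlt)]
              exact Fin.ext (by simp [hkdef])
        rw [← key, ih m A' hcard', Nat.succ_sub_succ]

end Count

section Moebius
variable {n : ℕ}

def fixF (π : Equiv.Perm (Fin n)) : Finset (Fin n) := univ.filter (fun k => π k = k)

def fixG (σ : Equiv.Perm (Fin (n+1))) : Finset (Fin n) :=
  univ.filter (fun k => σ k.castSucc = k.succ)

theorem supF (A : Finset (Fin n)) :
    ((univ : Finset (Equiv.Perm (Fin n))).filter (fun π => A ⊆ fixF π)).card
      = (n - A.card).factorial := by
  classical
  have h1 : (univ.filter (fun π : Equiv.Perm (Fin n) => A ⊆ fixF π))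
      = univ.filter (fun π => ∀ k ∈ A, π k = k) := by
    apply Finset.filter_congr
    intro π _
    constructor
    · intro h k hk
      have := h hk
      simpa [fixF] using this
    · intro h k hk
      simp only [fixF, Finset.mem_filter, Finset.mem_univ, true_and]
      exact h k hk
  rw [h1, ← Fintype.card_subtype]
  have e1 : {π : Equiv.Perm (Fin n) // ∀ k ∈ A, π k = k} ≃
      Equiv.Perm {x : Fin n // x ∉ A} := by
    refine (Equiv.subtypeEquivRight ?_).trans
      (Equiv.Perm.subtypeEquivSubtypePerm (fun x => x ∉ A)).symm
    intro π
    constructor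
    · intro h x hx
      exact h x (not_not.mp hx)
    · intro h k hk
      exact h k (not_not.mpr hk)
  rw [Fintype.card_congr e1, Fintype.card_perm]
  congr 1
  rw [Fintype.card_subtype_compl, Fintype.card_fin, Fintype.card_coe]

theorem supG (A : Finset (Fin n)) :
    ((univ : Finset (Equiv.Perm (Fin (n+1)))).filter
        (fun σ => IsFullCycle σ ∧ A ⊆ fixG σ)).card
      = (n - A.card).factorial := by
  classical
  have h1 : (univ.filter (fun σ : Equiv.Perm (Fin (n+1)) => IsFullCycle σ ∧ A ⊆ fixG σ))
      = univ.filter (fun σ => IsFullCycle σ ∧ ∀ k ∈ A, σ k.castSucc = k.succ) := by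
    apply Finset.filter_congr
    intro σ _
    apply and_congr_right
    intro _
    constructor
    · intro h k hk
      have := h hk
      simpa [fixG] using this
    · intro h k hk
      simp only [fixG, Finset.mem_filter, Finset.mem_univ, true_and]
      exact h k hk
  rw [h1]
  exact card_fc_constrained A.card n A rfl

theorem sum_fibers_F (A : Finset (Fin n)) :
    ((univ : Finset (Equiv.Perm (Fin n))).filter (fun π => A ⊆ fixF π)).card
      = ∑ B ∈ univ.filter (fun B => A ⊆ B),
          ((univ : Finset (Equiv.Perm (Fin n))).filter (fun π => fixF π = B)).card := by
  classical
  rw [Finset.card_eq_sum_card_fiberwise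
    (f := fixF) (t := univ.filter (fun B => A ⊆ B))
    (fun π hπ => by
      simp only [Finset.mem_coe, Finset.mem_filter, Finset.mem_univ, true_and] at hπ ⊢
      exact hπ)]
  apply Finset.sum_congr rfl
  intro B hB
  simp only [Finset.mem_filter, Finset.mem_univ, true_and] at hB
  congr 1
  ext π
  simp only [Finset.mem_filter, Finset.mem_univ, true_and]
  constructor
  · exact fun h => h.2
  · intro h
    exact ⟨h ▸ hB, h⟩

theorem sum_fibers_G (A : Finset (Fin n)) :
    ((univ : Finset (Equiv.Perm (Fin (n+1)))).filter
        (fun σ => IsFullCycle σ ∧ A ⊆ fixG σ)).card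
      = ∑ B ∈ univ.filter (fun B => A ⊆ B),
          ((univ : Finset (Equiv.Perm (Fin (n+1)))).filter
            (fun σ => IsFullCycle σ ∧ fixG σ = B)).card := by
  classical
  rw [Finset.card_eq_sum_card_fiberwise
    (f := fixG) (t := univ.filter (fun B => A ⊆ B))
    (fun σ hσ => by
      simp only [Finset.mem_coe, Finset.mem_filter, Finset.mem_univ, true_and] at hσ ⊢
      exact hσ.2)]
  apply Finset.sum_congr rfl
  intro B hB
  simp only [Finset.mem_filter, Finset.mem_univ, true_and] at hB
  congr 1
  ext σ
  simp only [Finset.mem_filter, Finset.mem_univ, true_and]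
  constructor
  · exact fun h => ⟨h.1.1, h.2⟩
  · intro h
    exact ⟨⟨h.1, h.2 ▸ hB⟩, h.2⟩

theorem cnt_eq (A : Finset (Fin n)) :
    ((univ : Finset (Equiv.Perm (Fin n))).filter (fun π => fixF π = A)).card
      = ((univ : Finset (Equiv.Perm (Fin (n+1)))).filter
          (fun σ => IsFullCycle σ ∧ fixG σ = A)).card := by
  classical
  suffices H : ∀ t : ℕ, ∀ A : Finset (Fin n), n - A.card < t →
      ((univ : Finset (Equiv.Perm (Fin n))).filter (fun π => fixF π = A)).card
        = ((univ : Finset (Equiv.Perm (Fin (n+1)))).filter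
            (fun σ => IsFullCycle σ ∧ fixG σ = A)).card by
    exact H (n+1) A (by omega)
  intro t
  induction t with
  | zero => intro A h; omega
  | succ t ih =>
      intro A h
      have hsplit : (univ : Finset (Finset (Fin n))).filter (fun B => A ⊆ B)
          = insert A (univ.filter (fun B => A ⊂ B)) := by
        ext B
        simp only [Finset.mem_insert, Finset.mem_filter, Finset.mem_univ, true_and]
        constructor
        · intro hAB
          rcases eq_or_ne B A with rfl | hne
          · exact Or.inl rfl
          · exact Or.inr (Finset.ssubset_iff_subset_ne.mpr ⟨hAB, hne.symm⟩)
        · rintro (rfl | hB)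
          · exact subset_rfl
          · exact (Finset.ssubset_iff_subset_ne.mp hB).1
      have hnotmem : A ∉ (univ : Finset (Finset (Fin n))).filter (fun B => A ⊂ B) := by
        simp only [Finset.mem_filter, Finset.mem_univ, true_and]
        exact fun hc => (Finset.ssubset_iff_subset_ne.mp hc).2 rfl
      have hsumF := sum_fibers_F A
      have hsumG := sum_fibers_G A
      rw [supF] at hsumF
      rw [supG] at hsumG
      rw [hsplit, Finset.sum_insert hnotmem] at hsumF hsumG
      have hss : ∑ B ∈ univ.filter (fun B => A ⊂ B),
            ((univ : Finset (Equiv.Perm (Fin n))).filter (fun π => fixF π = B)).card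
          = ∑ B ∈ univ.filter (fun B => A ⊂ B),
            ((univ : Finset (Equiv.Perm (Fin (n+1)))).filter
              (fun σ => IsFullCycle σ ∧ fixG σ = B)).card := by
        apply Finset.sum_congr rfl
        intro B hB
        simp only [Finset.mem_filter, Finset.mem_univ, true_and] at hB
        have hlt : A.card < B.card := Finset.card_lt_card hB
        have hle : B.card ≤ n := by
          have := B.card_le_univ
          simpa using this
        exact ih B (by omega)
      rw [hss] at hsumF
      exact Nat.add_right_cancel (hsumF.symm.trans hsumG)

end Moebius

end Stmt15

theorem ncard_filter_aux {α : Type*} [Fintype α] (p : α → Prop) [DecidablePred p] :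
    {x | p x}.ncard = (Finset.univ.filter p).card := by
  rw [← Set.ncard_coe_finset]
  congr 1
  ext x
  simp

/-- If `Π_n` is a uniform random permutation of `[n]` and `Γ_{n+1}` is a uniform random
`(n+1)`-cycle in `S_{n+1}`, then the random sets `F_n = {k ∈ [n] : Π_n(k) = k}` and
`G_n = {k ∈ [n] : Γ_{n+1}(k) = k+1}` have the same distribution as random subsets of
`[n]`: for every `A ⊆ [n]`, the count of permutations `π` of `[n]` with `F(π) = A`
equals the count of `(n+1)`-cycles `σ` with `{k ∈ [n] : σ(k) = k+1} = A` (both uniform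
distributions having `n!` atoms). -/
theorem stmt15 (n : ℕ) (A : Set (Fin n)) :
    Set.ncard {π : Equiv.Perm (Fin n) | {k : Fin n | π k = k} = A}
    =
    Set.ncard {σ : Equiv.Perm (Fin (n + 1)) | IsFullCycle σ ∧
        {k : Fin n | σ k.castSucc = k.succ} = A} := by
  classical
  set AF : Finset (Fin n) := (Set.toFinite A).toFinset with hAF
  have hcoe : (AF : Set (Fin n)) = A := (Set.toFinite A).coe_toFinset
  have hsetF : {π : Equiv.Perm (Fin n) | {k | π k = k} = A}
      = {π | Stmt15.fixF π = AF} := by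
    ext π
    simp only [Set.mem_setOf_eq]
    rw [← hcoe, ← Finset.coe_inj]
    have : ({k | π k = k} : Set (Fin n)) = ↑(Stmt15.fixF π) := by
      ext k
      simp [Stmt15.fixF]
    rw [this]
  have hsetG : {σ : Equiv.Perm (Fin (n + 1)) | IsFullCycle σ ∧
        {k : Fin n | σ k.castSucc = k.succ} = A}
      = {σ | IsFullCycle σ ∧ Stmt15.fixG σ = AF} := by
    ext σ
    simp only [Set.mem_setOf_eq]
    apply and_congr_right
    intro _
    rw [← hcoe, ← Finset.coe_inj]
    have : ({k : Fin n | σ k.castSucc = k.succ} : Set (Fin n)) = ↑(Stmt15.fixG σ) := by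
      ext k
      simp [Stmt15.fixG]
    rw [this]
  rw [hsetF, hsetG, ncard_filter_aux, ncard_filter_aux]
  exact Stmt15.cnt_eq AF
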